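/- For η ∈ ℝ, let 𝓗_η = {(x,y) ∈ ℝ² : 4 - x² + y² - 4ηy = 0} and let F(x,y) = (2x²/(4-y²), y + x²y/(4-y²)). If (x,y) ∈ 𝓗_η with x ≠ 0 and y² ≠ 4, then F(x,y) ∈ 𝓗_η. That is, each vertical hyperbola 𝓗_η is invariant under F. -/

import Mathlib

/-- Each vertical hyperbola 𝓗_η is invariant under F. -/
theorem vertical_hyperbola_invariant (η x y : ℝ)
    (h : 4 - x ^ 2 + y ^ 2 - 4 * η * y = 0) (hx : x ≠ 0) (hy : y ^ 2 ≠ 4) :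
    4 - (2 * x ^ 2 / (4 - y ^ 2)) ^ 2 + (y + x ^ 2 * y / (4 - y ^ 2)) ^ 2
      - 4 * η * (y + x ^ 2 * y / (4 - y ^ 2)) = 0 := by
  have hd : 4 - y ^ 2 ≠ 0 := fun hc => hy (by linarith [hc])
  have hx2 : x ^ 2 = 4 + y ^ 2 - 4 * η * y := by linarith
  field_simp
  rw [hx2]
  linear_combination (-4 * (x ^ 2 + (4 + y ^ 2 - 4 * η * y))) * hx2
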